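/- If a finite connected graph G is AT-free (1-AT-free), then G has a path P of eccentricity at most 1, i.e., every vertex of G is in the closed neighborhood of V(P). -/

import Mathlib

open SimpleGraph

/-- An asteroidal triple: three distinct vertices such that each pair is joined
by a path avoiding the closed neighborhood of the third. -/
def IsAT {V : Type*} (G : SimpleGraph V) (x y z : V) : Prop :=
  x ≠ y ∧ y ≠ z ∧ x ≠ z ∧
  (∃ p : G.Walk x y, p.IsPath ∧ ∀ w ∈ p.support, w ≠ z ∧ ¬ G.Adj z w) ∧
  (∃ p : G.Walk x z, p.IsPath ∧ ∀ w ∈ p.support, w ≠ y ∧ ¬ G.Adj y w) ∧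
  (∃ p : G.Walk y z, p.IsPath ∧ ∀ w ∈ p.support, w ≠ x ∧ ¬ G.Adj x w)

namespace ATFreeAux

variable {V : Type*}

/-- `v` avoids the closed neighborhood of `y`. -/
abbrev Av (G : SimpleGraph V) (y v : V) : Prop := v ≠ y ∧ ¬ G.Adj y v

/-- Vertices reachable from `x` by a walk avoiding `N[y]`. -/
def CC (G : SimpleGraph V) (x y : V) : Set V :=
  {w | ∃ q : G.Walk x w, ∀ v ∈ q.support, Av G y v}

lemma mem_CC {G : SimpleGraph V} {x y w : V} :
    w ∈ CC G x y ↔ ∃ q : G.Walk x w, ∀ v ∈ q.support, Av G y v := Iff.rfl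

lemma mem_CC_self {G : SimpleGraph V} {x y : V} (h : Av G y x) : x ∈ CC G x y :=
  ⟨Walk.nil, fun v hv => by
    rw [Walk.support_nil, List.mem_singleton] at hv
    subst hv; exact h⟩

lemma CC_trans {G : SimpleGraph V} {x y w w' : V} (hw : w ∈ CC G x y) (q : G.Walk w w')
    (hq : ∀ v ∈ q.support, Av G y v) : w' ∈ CC G x y := by
  obtain ⟨π, hπ⟩ := hw
  refine ⟨π.append q, fun v hv => ?_⟩
  rw [Walk.support_append] at hv
  rcases List.mem_append.1 hv with h | h
  · exact hπ v h
  · exact hq v (List.mem_of_mem_tail h)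

lemma CC_rev {G : SimpleGraph V} {x y w : V} (hw : w ∈ CC G x y) : x ∈ CC G w y := by
  obtain ⟨π, hπ⟩ := hw
  exact ⟨π.reverse, fun v hv =>
    hπ v (by rwa [Walk.support_reverse, List.mem_reverse] at hv)⟩

lemma CC_congr {G : SimpleGraph V} {x y w : V} (hw : w ∈ CC G x y) : CC G w y = CC G x y := by
  ext t
  constructor
  · intro ht
    obtain ⟨q, hq⟩ := ht
    exact CC_trans hw q hq
  · intro ht
    obtain ⟨q, hq⟩ := ht
    exact CC_trans (CC_rev hw) q hq

/-- Either a walk avoiding `N[y]` also avoids `N[u]`, or `u` itself is reachable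
from the start avoiding `N[y]`. -/
lemma walk_avoid_or {G : SimpleGraph V} {x w y : V} (π : G.Walk x w)
    (hπ : ∀ v ∈ π.support, Av G y v) (u : V) (hyu : Av G y u) :
    (∀ v ∈ π.support, Av G u v) ∨ u ∈ CC G x y := by
  classical
  by_cases h : ∀ v ∈ π.support, Av G u v
  · exact Or.inl h
  · right
    push_neg at h
    obtain ⟨v, hv, hnav⟩ := h
    have hq : ∀ z ∈ (π.takeUntil v hv).support, Av G y z :=
      fun z hz => hπ z (π.support_takeUntil_subset hv hz)
    by_cases hvu : v = u
    · exact ⟨(π.takeUntil v hv).copy rfl hvu, fun z hz =>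
        hq z (by rwa [Walk.support_copy] at hz)⟩
    · have hadj : G.Adj u v := by
        by_contra hna
        exact hnav ⟨hvu, hna⟩
      refine ⟨(π.takeUntil v hv).concat hadj.symm, fun z hz => ?_⟩
      rw [Walk.support_concat] at hz
      rcases List.mem_append.1 hz with h' | h'
      · exact hq z h'
      · rw [List.mem_singleton] at h'
        subst h'
        exact hyu

/-- The potential function on pairs. -/
noncomputable def ff [Fintype V] (G : SimpleGraph V) (x y : V) : ℕ :=
  (CC G x y ∪ CC G y x).ncard * (2 * Fintype.card V + 1) +
    ((CC G x y).ncard + (CC G y x).ncard)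

lemma ff_comm [Fintype V] (G : SimpleGraph V) (x y : V) : ff G x y = ff G y x := by
  simp only [ff]
  rw [Set.union_comm, Nat.add_comm ((CC G x y).ncard)]

lemma ncard_le_card [Fintype V] (s : Set V) : s.ncard ≤ Fintype.card V := by
  have h := Set.ncard_le_ncard (Set.subset_univ s) Set.finite_univ
  rwa [Set.ncard_univ, Nat.card_eq_fintype_card] at h

/-- Key step: if `u` is undominated by a walk `W` from `a` to `b` and there is no
`a`–`u` walk avoiding `N[b]`, then the pair `(a,u)` has strictly larger potential. -/
lemma step [Fintype V] {G : SimpleGraph V} {a b u : V}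
    (W : G.Walk a b) (hW : ∀ v ∈ W.support, Av G u v)
    (hu : u ∉ CC G a b) : ff G a b < ff G a u := by
  classical
  have hAvua : Av G u a := hW a W.start_mem_support
  have hAvub : Av G u b := hW b W.end_mem_support
  have hAvbu : Av G b u := ⟨hAvub.1.symm, fun h => hAvub.2 h.symm⟩
  have hAvau : Av G a u := ⟨hAvua.1.symm, fun h => hAvua.2 h.symm⟩
  have hsupC : ∀ v ∈ W.support, v ∈ CC G a u := fun v hv =>
    ⟨W.takeUntil v hv, fun z hz => hW z (W.support_takeUntil_subset hv hz)⟩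
  have hbCau : b ∈ CC G a u := hsupC b W.end_mem_support
  have hsub1 : CC G a b ⊆ CC G a u := by
    rintro w ⟨π, hπ⟩
    rcases walk_avoid_or π hπ u hAvbu with h | h
    · exact ⟨π, h⟩
    · exact absurd h hu
  have hbnot : b ∉ CC G a b := by
    rintro ⟨π, hπ⟩
    exact (hπ b π.end_mem_support).1 rfl
  have hlt1 : (CC G a b).ncard < (CC G a u).ncard := by
    apply Set.ncard_lt_ncard _ (Set.toFinite _)
    rw [Set.ssubset_iff_subset_ne]
    exact ⟨hsub1, fun hEq => hbnot (by rw [hEq]; exact hbCau)⟩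
  by_cases hm : u ∈ CC G b a
  · -- Then C(u,a) = C(b,a): the second coordinate is unchanged, first grows.
    have hEq : CC G u a = CC G b a := CC_congr hm
    have hν : (CC G a b ∪ CC G b a).ncard ≤ (CC G a u ∪ CC G u a).ncard := by
      apply Set.ncard_le_ncard _ (Set.toFinite _)
      rw [hEq]
      exact Set.union_subset_union hsub1 (subset_refl _)
    have hμ : (CC G a b).ncard + (CC G b a).ncard <
        (CC G a u).ncard + (CC G u a).ncard := by
      rw [hEq]
      exact Nat.add_lt_add_right hlt1 _
    simp only [ff]
    exact add_lt_add_of_le_of_lt (Nat.mul_le_mul_right _ hν) hμ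
  · -- Then C(b,a) ⊆ C(a,u) and u is a genuinely new reachable vertex: union grows.
    have hsub2 : CC G b a ⊆ CC G a u := by
      rintro w ⟨π, hπ⟩
      rcases walk_avoid_or π hπ u hAvau with h | h
      · exact CC_trans hbCau π h
      · exact absurd h hm
    have huCu : u ∈ CC G u a := mem_CC_self hAvau
    have hνlt : (CC G a b ∪ CC G b a).ncard < (CC G a u ∪ CC G u a).ncard := by
      apply Set.ncard_lt_ncard _ (Set.toFinite _)
      rw [Set.ssubset_iff_subset_ne]
      constructor
      · exact Set.union_subset (hsub1.trans Set.subset_union_left)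
          (hsub2.trans Set.subset_union_left)
      · intro hEq
        have hmem : u ∈ CC G a b ∪ CC G b a := by
          rw [hEq]
          exact Set.mem_union_right _ huCu
        rcases hmem with h | h
        · exact hu h
        · exact hm h
    have hbound : (CC G a b).ncard + (CC G b a).ncard < 2 * Fintype.card V + 1 := by
      have h1 := ncard_le_card (CC G a b)
      have h2 := ncard_le_card (CC G b a)
      omega
    have hmul : ((CC G a b ∪ CC G b a).ncard + 1) * (2 * Fintype.card V + 1) ≤
        (CC G a u ∪ CC G u a).ncard * (2 * Fintype.card V + 1) :=
      Nat.mul_le_mul_right _ hνlt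
    rw [Nat.succ_mul] at hmul
    simp only [ff]
    calc (CC G a b ∪ CC G b a).ncard * (2 * Fintype.card V + 1) +
          ((CC G a b).ncard + (CC G b a).ncard)
        < (CC G a b ∪ CC G b a).ncard * (2 * Fintype.card V + 1) +
          (2 * Fintype.card V + 1) := Nat.add_lt_add_left hbound _
      _ ≤ (CC G a u ∪ CC G u a).ncard * (2 * Fintype.card V + 1) := hmul
      _ ≤ _ := Nat.le_add_right _ _

end ATFreeAux

open ATFreeAux in
/-- A finite connected AT-free graph has a path of eccentricity at most 1:
every vertex is in the closed neighborhood of the path. -/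
theorem ATfree_pathEcc_le_one {V : Type*} [Fintype V] (G : SimpleGraph V)
    (hG : G.Connected) (hAT : ∀ x y z : V, ¬ IsAT G x y z) :
    ∃ (x y : V) (p : G.Walk x y), p.IsPath ∧
      ∀ u : V, ∃ v ∈ p.support, u = v ∨ G.Adj v u := by
  classical
  by_cases hcomp : ∀ x y : V, x ≠ y → G.Adj x y
  · -- complete graph: a single vertex dominates
    obtain ⟨x⟩ := hG.nonempty
    refine ⟨x, x, Walk.nil, Walk.IsPath.nil, fun u => ⟨x, Walk.start_mem_support _, ?_⟩⟩
    by_cases h : u = x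
    · exact Or.inl h
    · exact Or.inr ((hcomp u x h).symm)
  · push_neg at hcomp
    obtain ⟨a0, b0, hne0, hnadj0⟩ := hcomp
    obtain ⟨⟨a, b⟩, hmem, hmax⟩ :=
      (Finset.univ.filter fun q : V × V => q.1 ≠ q.2 ∧ ¬ G.Adj q.1 q.2).exists_max_image
        (fun q => ff G q.1 q.2)
        ⟨(a0, b0), Finset.mem_filter.2 ⟨Finset.mem_univ _, hne0, hnadj0⟩⟩
    obtain ⟨-, hab, hnadj⟩ := Finset.mem_filter.1 hmem
    obtain ⟨w0⟩ := hG.preconnected a b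
    refine ⟨a, b, w0.bypass, w0.bypass_isPath, fun u => ?_⟩
    by_contra hcon
    push_neg at hcon
    have hW : ∀ v ∈ w0.bypass.support, Av G u v := fun v hv =>
      ⟨(hcon v hv).1.symm, fun h => (hcon v hv).2 h.symm⟩
    have hAvua : Av G u a := hW a (Walk.start_mem_support _)
    have hAvub : Av G u b := hW b (Walk.end_mem_support _)
    have hd : u ∉ CC G a b ∨ u ∉ CC G b a := by
      by_contra hcd
      push_neg at hcd
      obtain ⟨⟨π2, hπ2⟩, ⟨π3, hπ3⟩⟩ := hcd
      exact hAT a b u ⟨hab, hAvub.1, hAvua.1,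
        ⟨w0.bypass, w0.bypass_isPath, hW⟩,
        ⟨π2.bypass, π2.bypass_isPath, fun w hw => hπ2 w (π2.support_bypass_subset hw)⟩,
        ⟨π3.bypass, π3.bypass_isPath, fun w hw => hπ3 w (π3.support_bypass_subset hw)⟩⟩
    rcases hd with hd | hd
    · have hstep := step w0.bypass hW hd
      have hle : ff G a u ≤ ff G a b :=
        hmax (a, u) (Finset.mem_filter.2
          ⟨Finset.mem_univ _, hAvua.1, fun h => hAvua.2 h.symm⟩)
      exact absurd hstep (not_lt.2 hle)
    · have hW' : ∀ v ∈ w0.bypass.reverse.support, Av G u v := fun v hv =>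
        hW v (by rwa [Walk.support_reverse, List.mem_reverse] at hv)
      have hstep := step w0.bypass.reverse hW' hd
      have hle : ff G b u ≤ ff G a b :=
        hmax (b, u) (Finset.mem_filter.2
          ⟨Finset.mem_univ _, hAvub.1, fun h => hAvub.2 h.symm⟩)
      rw [ff_comm G a b] at hle
      exact absurd hstep (not_lt.2 hle)
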